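/- Degeneration T_05 → T_11: let μ be the commutative bilinear product on ℂ³ with u₁∘u₁ = u₁, u₂∘u₂ = u₂, u₁∘u₃ = (1/2)u₃ and all other products of basis vectors zero, and let λ be the commutative bilinear product with u₁∘u₁ = u₁, u₁∘u₂ = (1/2)u₂, u₁∘u₃ = u₃ and all other products of basis vectors zero. Then λ lies in the closure of the orbit {g·μ : g ∈ GL(3,ℂ)} in the space of bilinear maps ℂ³ × ℂ³ → ℂ³ with its standard topology. -/

import Mathlib

open Matrix

/-- The bilinear product on `ℂ³` determined by structure constants `c`:
`(x ∘ y) k = ∑ i j, x i * y j * c i j k`. -/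
noncomputable def bilOf (c : Fin 3 → Fin 3 → Fin 3 → ℂ) (x y : Fin 3 → ℂ) : Fin 3 → ℂ :=
  fun k => ∑ i, ∑ j, x i * y j * c i j k

/-- The action of `g ∈ GL(3,ℂ)` on structure constants, corresponding to the
action `(g·μ)(x,y) = g(μ(g⁻¹x, g⁻¹y))` on bilinear maps: `(act g c) i j` is the
coordinate vector of `(g·μ)(uᵢ, uⱼ)` in the standard basis `u₁, u₂, u₃`. -/
noncomputable def act (g : GL (Fin 3) ℂ) (c : Fin 3 → Fin 3 → Fin 3 → ℂ) :
    Fin 3 → Fin 3 → Fin 3 → ℂ :=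
  fun i j => (g : Matrix (Fin 3) (Fin 3) ℂ).mulVec
    (bilOf c (((g⁻¹ : GL (Fin 3) ℂ) : Matrix (Fin 3) (Fin 3) ℂ).mulVec (Pi.single i 1))
             (((g⁻¹ : GL (Fin 3) ℂ) : Matrix (Fin 3) (Fin 3) ℂ).mulVec (Pi.single j 1)))

noncomputable def mMat (t : ℂ) : Matrix (Fin 3) (Fin 3) ℂ :=
  ![![1/2, 1/2, 0], ![0, 0, 1/t], ![1/(2*t), -(1/(2*t)), 0]]

def mInv (t : ℂ) : Matrix (Fin 3) (Fin 3) ℂ :=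
  ![![1, 0, t], ![1, 0, -t], ![0, t, 0]]

lemma mMat_mul_mInv (t : ℂ) (ht : t ≠ 0) : mMat t * mInv t = 1 := by
  ext i j
  fin_cases i <;> fin_cases j <;>
    simp [Matrix.mul_apply, Fin.sum_univ_three] <;> simp [mMat, mInv] <;> field_simp <;> ring

lemma mInv_mul_mMat (t : ℂ) (ht : t ≠ 0) : mInv t * mMat t = 1 := by
  ext i j
  fin_cases i <;> fin_cases j <;>
    simp [Matrix.mul_apply, Fin.sum_univ_three] <;> simp [mMat, mInv] <;> field_simp <;> ring

noncomputable def gT (t : ℂ) (ht : t ≠ 0) : GL (Fin 3) ℂ :=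
  ⟨mMat t, mInv t, mMat_mul_mInv t ht, mInv_mul_mMat t ht⟩

lemma gT_inv_coe (t : ℂ) (ht : t ≠ 0) :
    (((gT t ht)⁻¹ : GL (Fin 3) ℂ) : Matrix (Fin 3) (Fin 3) ℂ) = mInv t := rfl

noncomputable def cT (t : ℂ) : Fin 3 → Fin 3 → Fin 3 → ℂ :=
  ![![![(1:ℂ),0,0],![(0:ℂ),1/2,0],![(0:ℂ),0,1]],
    ![![(0:ℂ),1/2,0],![(0:ℂ),0,0],![(0:ℂ),t/2,0]],
    ![![(0:ℂ),0,1],![(0:ℂ),t/2,0],![(t^2:ℂ),0,0]]]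

noncomputable def mu : Fin 3 → Fin 3 → Fin 3 → ℂ :=
  ![![![(1:ℂ),0,0],![(0:ℂ),0,0],![(0:ℂ),0,1/2]],![![(0:ℂ),0,0],![(0:ℂ),1,0],![(0:ℂ),0,0]],![![(0:ℂ),0,1/2],![(0:ℂ),0,0],![(0:ℂ),0,0]]]

lemma gT_coe (t : ℂ) (ht : t ≠ 0) :
    ((gT t ht : GL (Fin 3) ℂ) : Matrix (Fin 3) (Fin 3) ℂ) = mMat t := rfl

lemma bil_mu (x y : Fin 3 → ℂ) :
    bilOf mu x y = ![x 0 * y 0, x 1 * y 1, x 0 * y 2 / 2 + x 2 * y 0 / 2] := by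
  funext k
  fin_cases k <;> simp [bilOf, mu, Fin.sum_univ_three, Matrix.vecHead, Matrix.vecTail] <;> ring

set_option maxHeartbeats 1600000 in
lemma act_gT (t : ℂ) (ht : t ≠ 0) : act (gT t ht) mu = cT t := by
  funext i j k
  simp only [act, gT_inv_coe t ht, gT_coe t ht, Matrix.mulVec_single_one, Matrix.col, Matrix.transpose_apply, bil_mu]
  fin_cases i <;> fin_cases j <;> fin_cases k <;>
    · simp [cT, mMat, mInv, Matrix.mulVec, dotProduct, Fin.sum_univ_three,
        Matrix.transpose_apply, Matrix.vecHead, Matrix.vecTail]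
      try field_simp
      try ring

/-- Degeneration T_05 → T_11: here μ is u₁∘u₁ = u₁, u₂∘u₂ = u₂, u₁∘u₃ = (1/2)u₃ and λ is u₁∘u₁ = u₁, u₁∘u₂ = (1/2)u₂, u₁∘u₃ = u₃; λ lies in the closure of the GL(3,ℂ)-orbit of μ. -/
theorem degeneration_T05_T11 :
    (![![![(1:ℂ),0,0],![(0:ℂ),1/2,0],![(0:ℂ),0,1]],![![(0:ℂ),1/2,0],![(0:ℂ),0,0],![(0:ℂ),0,0]],![![(0:ℂ),0,1],![(0:ℂ),0,0],![(0:ℂ),0,0]]] : Fin 3 → Fin 3 → Fin 3 → ℂ)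
      ∈ closure {c : Fin 3 → Fin 3 → Fin 3 → ℂ |
          ∃ g : GL (Fin 3) ℂ, c = act g (![![![(1:ℂ),0,0],![(0:ℂ),0,0],![(0:ℂ),0,1/2]],![![(0:ℂ),0,0],![(0:ℂ),1,0],![(0:ℂ),0,0]],![![(0:ℂ),0,1/2],![(0:ℂ),0,0],![(0:ℂ),0,0]]] : Fin 3 → Fin 3 → Fin 3 → ℂ)} := by
  have hne : ∀ n : ℕ, ((n : ℂ) + 1) ≠ 0 := fun n => Nat.cast_add_one_ne_zero n
  have hne' : ∀ n : ℕ, (((n : ℂ) + 1)⁻¹) ≠ 0 := fun n => inv_ne_zero (hne n)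
  have hcont : Continuous cT := by
    apply continuous_pi; intro i; apply continuous_pi; intro j; apply continuous_pi; intro k
    fin_cases i <;> fin_cases j <;> fin_cases k <;> simp [cT] <;> fun_prop
  have htend : Filter.Tendsto (fun n : ℕ => (((n : ℂ) + 1)⁻¹)) Filter.atTop (nhds 0) := by
    have : Filter.Tendsto (fun n : ℕ => ((1 / ((n : ℝ) + 1) : ℝ) : ℂ)) Filter.atTop (nhds ((0:ℝ):ℂ)) :=
      (Complex.continuous_ofReal.tendsto _).comp tendsto_one_div_add_atTop_nhds_zero_nat
    simpa [one_div] using this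
  have key : Filter.Tendsto (fun n : ℕ => cT (((n : ℂ) + 1)⁻¹)) Filter.atTop
      (nhds (cT 0)) := (hcont.tendsto 0).comp htend
  have hc0 : cT 0 = (![![![(1:ℂ),0,0],![(0:ℂ),1/2,0],![(0:ℂ),0,1]],![![(0:ℂ),1/2,0],![(0:ℂ),0,0],![(0:ℂ),0,0]],![![(0:ℂ),0,1],![(0:ℂ),0,0],![(0:ℂ),0,0]]] : Fin 3 → Fin 3 → Fin 3 → ℂ) := by
    funext i j k
    fin_cases i <;> fin_cases j <;> fin_cases k <;> simp [cT]
  rw [← hc0]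
  refine mem_closure_of_tendsto key (Filter.Eventually.of_forall ?_)
  intro n
  exact ⟨gT _ (hne' n), (act_gT _ (hne' n)).symm⟩
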